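/- For a market with n > 2 assets, the only permutation p ∈ Σ_n for which the permutation-weighted portfolio π_i(t) = μ_{p(i)}(t) is functionally generated is the identity permutation (which gives the market portfolio). -/

import Mathlib

open Filter Topology

/-- Directional derivative of `y ↦ y a / y b + h y` at a point with `x b ≠ 0`. -/
lemma fderiv_ratio_add {n : ℕ} (x : Fin n → ℝ) (h : (Fin n → ℝ) → ℝ)
    (hhx : DifferentiableAt ℝ h x) (a b c : Fin n) (hb : x b ≠ 0) :
    fderiv ℝ (fun y : Fin n → ℝ => y a / y b + h y) x (Pi.single c 1)
      = ((if a = c then (x b)⁻¹ else 0) - (if b = c then x a / x b ^ 2 else 0))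
        + fderiv ℝ h x (Pi.single c 1) := by
  have hproj : ∀ a : Fin n, HasFDerivAt (fun y : Fin n → ℝ => y a)
      ((ContinuousLinearMap.proj a : (Fin n → ℝ) →L[ℝ] ℝ)) x := by
    intro a
    exact (ContinuousLinearMap.proj a : (Fin n → ℝ) →L[ℝ] ℝ).hasFDerivAt
  have hinv : HasFDerivAt (fun y : Fin n → ℝ => (y b)⁻¹)
      ((-(x b ^ 2)⁻¹) • (ContinuousLinearMap.proj b :
        (Fin n → ℝ) →L[ℝ] ℝ)) x :=
    (hasDerivAt_inv hb).comp_hasFDerivAt x (hproj b)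
  have hdiv : HasFDerivAt (fun y : Fin n → ℝ => y a / y b)
      (x a • ((-(x b ^ 2)⁻¹) • (ContinuousLinearMap.proj b : (Fin n → ℝ) →L[ℝ] ℝ))
        + (x b)⁻¹ • (ContinuousLinearMap.proj a : (Fin n → ℝ) →L[ℝ] ℝ)) x := by
    simp only [div_eq_mul_inv]
    exact (hproj a).mul hinv
  have hsum := hdiv.add hhx.hasFDerivAt
  rw [show (fun y : Fin n → ℝ => y a / y b + h y) = (fun y => y a / y b) + h from rfl,
    hsum.fderiv]
  simp only [ContinuousLinearMap.add_apply, ContinuousLinearMap.smul_apply,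
    ContinuousLinearMap.proj_apply, Pi.single_apply, smul_eq_mul]
  split_ifs <;> ring

/-- `y ↦ y i / y i + 0` has zero Fréchet derivative everywhere. -/
lemma fderiv_self_ratio_zero {n : ℕ} (i : Fin n) (x : Fin n → ℝ) :
    fderiv ℝ (fun y : Fin n → ℝ => y i / y i + (0 : ℝ)) x = 0 := by
  by_cases hx : x i = 0
  · apply fderiv_zero_of_not_differentiableAt
    intro hd
    have hc := hd.continuousAt
    have hseq : Tendsto (fun k : ℕ => Function.update x i (1 / (k + 1 : ℝ))) atTop (𝓝 x) := by
      rw [tendsto_pi_nhds]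
      intro a
      by_cases ha : a = i
      · subst ha
        simp only [Function.update_self, hx]
        exact tendsto_one_div_add_atTop_nhds_zero_nat
      · simp only [Function.update_of_ne ha]
        exact tendsto_const_nhds
    have h1 : Tendsto (fun k : ℕ =>
        (fun y : Fin n → ℝ => y i / y i + (0 : ℝ)) (Function.update x i (1 / (k + 1 : ℝ))))
        atTop (𝓝 ((fun y : Fin n → ℝ => y i / y i + (0 : ℝ)) x)) :=
      (hc.tendsto).comp hseq
    have h2 : ∀ k : ℕ,
        (fun y : Fin n → ℝ => y i / y i + (0 : ℝ)) (Function.update x i (1 / (k + 1 : ℝ)))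
          = 1 := by
      intro k
      have hk : (1 / (k + 1 : ℝ)) ≠ 0 := by positivity
      simp [Function.update_self, div_self hk]
      field_simp
    simp only [h2, hx, div_zero, add_zero, zero_div] at h1
    have := tendsto_nhds_unique h1 tendsto_const_nhds
    norm_num at this
  · have heq : (fun y : Fin n → ℝ => y i / y i + (0 : ℝ)) =ᶠ[𝓝 x] fun _ => (1 : ℝ) := by
      have hopen : IsOpen {y : Fin n → ℝ | y i ≠ 0} :=
        isOpen_ne.preimage (continuous_apply i)
      filter_upwards [hopen.mem_nhds hx] with y hy
      simp [div_self hy]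
    rw [heq.fderiv_eq]
    exact fderiv_const_apply 1

/-- For a market with `n > 2` assets, the only permutation
`p ∈ Σ_n` for which the permutation-weighted portfolio `π_i = μ_{p(i)}` is
functionally generated is the identity permutation. Functional generation is taken,
per Fernholz (2002, Prop. 3.1.11), to mean: there exists a `C¹` function `h` on an
open neighborhood `U` of the simplex with
`D_j (f_i(x)/x_i + h(x)) = D_i (f_j(x)/x_j + h(x))` for all `i, j`, where
`f_i(x) = x_{p(i)}` and `D_a f x = fderiv ℝ f x (Pi.single a 1)`. -/
theorem permutation_portfolio_generated_iff_identity (n : ℕ) (hn : 2 < n)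
    (U : Set (Fin n → ℝ)) (hUopen : IsOpen U) (hU : stdSimplex ℝ (Fin n) ⊆ U)
    (p : Equiv.Perm (Fin n)) :
    (∃ h : (Fin n → ℝ) → ℝ, ContDiffOn ℝ 1 h U ∧
      ∀ x ∈ U, ∀ i j : Fin n,
        fderiv ℝ (fun y : Fin n → ℝ => y (p i) / y i + h y) x (Pi.single j 1)
          = fderiv ℝ (fun y : Fin n → ℝ => y (p j) / y j + h y) x (Pi.single i 1))
    ↔ p = 1 := by
  constructor
  · rintro ⟨h, hh, hcond⟩
    by_contra hp
    -- get a non-fixed point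
    obtain ⟨i, hi⟩ : ∃ i, p i ≠ i := by
      by_contra hfix
      push_neg at hfix
      exact hp (Equiv.ext fun a => by simp [hfix a])
    set j := p i with hjdef
    have hji : j ≠ i := hi
    have hij : i ≠ j := hji.symm
    -- a third index
    obtain ⟨k, hki, hkj⟩ : ∃ k, k ≠ i ∧ k ≠ j := by
      by_contra hk
      push_neg at hk
      have hsub : (Finset.univ : Finset (Fin n)) ⊆ {i, j} := by
        intro a _
        rcases eq_or_ne a i with rfl | ha
        · simp
        · simp [hk a ha]
      have := Finset.card_le_card hsub
      simp only [Finset.card_univ, Fintype.card_fin] at this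
      have h2 : ({i, j} : Finset (Fin n)).card ≤ 2 :=
        (Finset.card_insert_le i {j}).trans (by simp)
      omega
    have hik : i ≠ k := hki.symm
    have hjk : j ≠ k := hkj.symm
    have hN : (3 : ℝ) ≤ (n : ℝ) := by exact_mod_cast hn
    have hN0 : (n : ℝ) ≠ 0 := by positivity
    -- the test point
    set x : Fin n → ℝ := fun a => (if a = i then (1 : ℝ)/2 else 0) + 1/(2*(n : ℝ)) with hxdef
    have hxpos : ∀ a, 0 < x a := by
      intro a
      simp only [hxdef]
      split_ifs <;> positivity
    have hxmem : x ∈ stdSimplex ℝ (Fin n) := by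
      constructor
      · intro a; exact (hxpos a).le
      · simp only [hxdef]
        rw [Finset.sum_add_distrib, Finset.sum_ite_eq' Finset.univ i (fun _ => (1 : ℝ)/2),
          Finset.sum_const, Finset.card_univ, Fintype.card_fin]
        simp only [Finset.mem_univ, if_true, nsmul_eq_mul]
        field_simp
        ring
    have hxU : x ∈ U := hU hxmem
    have hdh : DifferentiableAt ℝ h x :=
      ((hh.differentiableOn one_ne_zero) x hxU).differentiableAt (hUopen.mem_nhds hxU)
    have hxi : (x i)⁻¹ = 2*(n : ℝ)/((n : ℝ)+1) := by
      have hv : x i = ((n : ℝ)+1)/(2*(n : ℝ)) := by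
        simp only [hxdef, if_pos rfl, if_true]
        field_simp
        try ring
      rw [hv, inv_div]
    have hxj : (x j)⁻¹ = 2*(n : ℝ) := by
      simp only [hxdef, if_neg hji, zero_add, one_div, inv_inv]
    have hxk : (x k)⁻¹ = 2*(n : ℝ) := by
      simp only [hxdef, if_neg hki, zero_add, one_div, inv_inv]
    have hq1 : 0 < 2*(n : ℝ)/((n : ℝ)+1) := by positivity
    have hq2 : 2*(n : ℝ)/((n : ℝ)+1) < 6 := by
      rw [div_lt_iff₀ (by positivity)]
      nlinarith
    have E1 := hcond x hxU i j
    have E2 := hcond x hxU j k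
    have E3 := hcond x hxU k i
    rw [fderiv_ratio_add x h hdh (p i) i j (hxpos i).ne',
      fderiv_ratio_add x h hdh (p j) j i (hxpos j).ne'] at E1
    rw [fderiv_ratio_add x h hdh (p j) j k (hxpos j).ne',
      fderiv_ratio_add x h hdh (p k) k j (hxpos k).ne'] at E2
    rw [fderiv_ratio_add x h hdh (p k) k i (hxpos k).ne',
      fderiv_ratio_add x h hdh (p i) i k (hxpos i).ne'] at E3
    by_cases h1 : p j = i <;> by_cases h2 : p j = k <;>
      by_cases h3 : p k = i <;> by_cases h4 : p k = j <;>
      simp only [← hjdef, h1, h2, h3, h4, hij, hji, hjk, hkj, hik, hki, hxi, hxj, hxk,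
        if_true, if_false, eq_self_iff_true, ite_true, ite_false, sub_zero, zero_sub,
        add_zero, zero_add] at E1 E2 E3 <;>
      linarith [E1, E2, E3, hq1, hq2, hN]
  · rintro rfl
    refine ⟨fun _ => 0, contDiffOn_const, fun x _ i j => ?_⟩
    simp only [Equiv.Perm.coe_one, id_eq]
    rw [show (fun y : Fin n → ℝ => y i / y i + (fun _ => (0:ℝ)) y)
        = fun y : Fin n → ℝ => y i / y i + (0 : ℝ) from rfl,
      show (fun y : Fin n → ℝ => y j / y j + (fun _ => (0:ℝ)) y)
        = fun y : Fin n → ℝ => y j / y j + (0 : ℝ) from rfl,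
      fderiv_self_ratio_zero, fderiv_self_ratio_zero]
    simp
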